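/- For every finite CGS (or ATS), every coalition A, and all ATL state formulas φ and ψ, the set ⟦⟨A⟩(φ U ψ)⟧ of locations satisfying ⟨A⟩(φ U ψ) is the least fixpoint of the monotone map Z ↦ ⟦ψ⟧ ∪ (⟦φ⟧ ∩ CPre(A, Z)) on subsets of Loc. -/

import Mathlib

/-!  Core formalization of concurrent game structures (CGS), alternating
transition systems (ATS), and the logic ATL, following Alur-Henzinger-Kupferman
and Laroussinie-Markey-Oreiby, "On the Expressiveness and Complexity of ATL".

A generic "game structure" `GS Agt Loc P M` has locations labelled by atomic
propositions from `P`, and in each location each agent has a set of available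
moves (of type `M`); a joint move (one move per agent) leads to a set of
possible successor locations (a singleton for CGSs, the intersection of the
chosen sets for ATSs). -/

structure GS (Agt Loc P M : Type) where
  lab : Loc → Set P
  mov : Loc → Agt → Set M
  step : Loc → (Agt → M) → Set Loc

namespace GS

variable {Agt Loc P M : Type}

/-- a complete joint move, valid at `ℓ`. -/
def ValidMove (S : GS Agt Loc P M) (ℓ : Loc) (m : Agt → M) : Prop :=
  ∀ a, m a ∈ S.mov ℓ a

/-- `Next ℓ A mA`: locations reachable from `ℓ` when each member `a` of the
coalition `A` plays `mA a` (and the other agents play arbitrary valid moves). -/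
def Next (S : GS Agt Loc P M) (ℓ : Loc) (A : Set Agt) (mA : Agt → M) : Set Loc :=
  {ℓ' | ∃ m, S.ValidMove ℓ m ∧ (∀ a ∈ A, m a = mA a) ∧ ℓ' ∈ S.step ℓ m}

/-- all possible successors of `ℓ`. -/
def NextAll (S : GS Agt Loc P M) (ℓ : Loc) : Set Loc :=
  {ℓ' | ∃ m, S.ValidMove ℓ m ∧ ℓ' ∈ S.step ℓ m}

/-- the controllable predecessors: `ℓ ∈ CPre A T` iff coalition `A` has a move
forcing the next location to be in `T`. -/
def CPre (S : GS Agt Loc P M) (A : Set Agt) (T : Set Loc) : Set Loc :=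
  {ℓ | ∃ mA : Agt → M, (∀ a ∈ A, mA a ∈ S.mov ℓ a) ∧ S.Next ℓ A mA ⊆ T}

theorem cpre_mono (S : GS Agt Loc P M) (A : Set Agt) : Monotone (S.CPre A) := by
  intro T T' h ℓ hℓ
  obtain ⟨mA, hv, hn⟩ := hℓ
  exact ⟨mA, hv, hn.trans h⟩

/-- A strategy maps the (strict) past history and current location to a move
for each agent (only the moves of the coalition members are relevant). -/
def Strat (Agt Loc M : Type) : Type := List Loc → Loc → Agt → M

def StratValid (S : GS Agt Loc P M) (A : Set Agt) (F : Strat Agt Loc M) : Prop :=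
  ∀ h ℓ a, a ∈ A → F h ℓ a ∈ S.mov ℓ a

/-- a strategy is memoryless (state-based) if it only depends on the current
location. -/
def Memoryless (F : Strat Agt Loc M) : Prop :=
  ∀ h h' ℓ a, F h ℓ a = F h' ℓ a

/-- the history `ρ 0, …, ρ (i-1)`. -/
def hist (ρ : ℕ → Loc) (i : ℕ) : List Loc := List.ofFn (fun j : Fin i => ρ j)

/-- computations from `ℓ`. -/
def Comp (S : GS Agt Loc P M) (ℓ : Loc) (ρ : ℕ → Loc) : Prop :=
  ρ 0 = ℓ ∧ ∀ i, ρ (i + 1) ∈ S.NextAll (ρ i)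

/-- the outcomes of a strategy `F` of coalition `A` from `ℓ`. -/
def Out (S : GS Agt Loc P M) (A : Set Agt) (ℓ : Loc) (F : Strat Agt Loc M)
    (ρ : ℕ → Loc) : Prop :=
  ρ 0 = ℓ ∧ ∀ i, ρ (i + 1) ∈ S.Next (ρ i) A (F (hist ρ i) (ρ i))

end GS

/-! ### ATL syntax and semantics -/

mutual
  /-- ATL state formulas. -/
  inductive SForm (Agt P : Type) : Type where
    | tru : SForm Agt P
    | atom : P → SForm Agt P
    | snot : SForm Agt P → SForm Agt P
    | sor : SForm Agt P → SForm Agt P → SForm Agt P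
    | coal : Set Agt → PForm Agt P → SForm Agt P
  /-- ATL path formulas. -/
  inductive PForm (Agt P : Type) : Type where
    | pnot : PForm Agt P → PForm Agt P
    | nxt : SForm Agt P → PForm Agt P
    | untl : SForm Agt P → SForm Agt P → PForm Agt P
end

mutual
  /-- satisfaction of an ATL state formula at a location. -/
  def SSat {Agt Loc P M : Type} (S : GS Agt Loc P M) : SForm Agt P → Loc → Prop
    | .tru, _ => True
    | .atom p, ℓ => p ∈ S.lab ℓ
    | .snot φ, ℓ => ¬ SSat S φ ℓ
    | .sor φ ψ, ℓ => SSat S φ ℓ ∨ SSat S ψ ℓ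
    | .coal A φ, ℓ =>
        ∃ F : GS.Strat Agt Loc M, S.StratValid A F ∧
          ∀ ρ : ℕ → Loc, S.Out A ℓ F ρ → PSat S φ ρ
  /-- satisfaction of an ATL path formula along a sequence of locations. -/
  def PSat {Agt Loc P M : Type} (S : GS Agt Loc P M) : PForm Agt P → (ℕ → Loc) → Prop
    | .pnot φ, ρ => ¬ PSat S φ ρ
    | .nxt φ, ρ => SSat S φ (ρ 1)
    | .untl φ ψ, ρ => ∃ i, SSat S ψ (ρ i) ∧ ∀ j < i, SSat S φ (ρ j)
end

/-- the release modality:  `φ R ψ := ¬((¬φ) U (¬ψ))`. -/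
def PForm.rel {Agt P : Type} (φ ψ : SForm Agt P) : PForm Agt P :=
  .pnot (.untl φ.snot ψ.snot)

/-- the weak-until modality:  `φ W ψ := ψ R (φ ∨ ψ)`. -/
def PForm.wuntl {Agt P : Type} (φ ψ : SForm Agt P) : PForm Agt P :=
  PForm.rel ψ (φ.sor ψ)

/-- conjunction of state formulas. -/
def SForm.sand {Agt P : Type} (φ ψ : SForm Agt P) : SForm Agt P :=
  .snot (.sor φ.snot ψ.snot)

/-- the set of locations satisfying a state formula. -/
def SatSet {Agt Loc P M : Type} (S : GS Agt Loc P M) (φ : SForm Agt P) : Set Loc :=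
  {ℓ | SSat S φ ℓ}

/-! ### Concurrent game structures (explicit) and alternating transition systems -/

/-- an (explicit) concurrent game structure: moves are natural numbers, and the
transition table gives the successor of each joint move. -/
structure CGS (Agt Loc P : Type) where
  lab : Loc → Set P
  chc : Loc → Agt → Finset ℕ
  edg : Loc → (Agt → ℕ) → Loc

namespace CGS

variable {Agt Loc P : Type}

def WellFormed (G : CGS Agt Loc P) : Prop := ∀ ℓ a, (G.chc ℓ a).Nonempty

def toGS (G : CGS Agt Loc P) : GS Agt Loc P ℕ where
  lab := G.lab
  mov ℓ a := ↑(G.chc ℓ a)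
  step ℓ m := {G.edg ℓ m}

/-- a CGS is turn-based if in every location at most one agent has more than
one available move. -/
def TurnBased (G : CGS Agt Loc P) : Prop :=
  ∀ ℓ (a b : Agt), 1 < (G.chc ℓ a).card → 1 < (G.chc ℓ b).card → a = b

end CGS

/-- an alternating transition system: a move of an agent is a set of locations;
a joint move leads to the intersection of the chosen sets (a singleton when the
ATS is well-formed). -/
structure ATS (Agt Loc P : Type) where
  lab : Loc → Set P
  chc : Loc → Agt → Set (Set Loc)

namespace ATS

variable {Agt Loc P : Type}

/-- well-formedness: each agent always has some available move, and each joint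
choice of moves intersects in a singleton. -/
def WellFormed (T : ATS Agt Loc P) : Prop :=
  (∀ ℓ a, (T.chc ℓ a).Nonempty) ∧
  ∀ ℓ (Q : Agt → Set Loc), (∀ a, Q a ∈ T.chc ℓ a) → ∃ ℓ', (⋂ a, Q a) = {ℓ'}

def toGS (T : ATS Agt Loc P) : GS Agt Loc P (Set Loc) where
  lab := T.lab
  mov := T.chc
  step _ Q := ⋂ a, Q a

end ATS

/-! ### Statement 7

The set of locations satisfying `⟨A⟩(φ U ψ)` is the least fixpoint of the
monotone map `Z ↦ ⟦ψ⟧ ∪ (⟦φ⟧ ∩ CPre(A, Z))`, both on CGSs and on ATSs. -/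

/-- the fixpoint characterization of `⟨A⟩(φ U ψ)`, for a generic game
structure. -/
def UntilLfpClaim {Agt Loc P M : Type} (S : GS Agt Loc P M) (A : Set Agt)
    (φ ψ : SForm Agt P) : Prop :=
  Monotone (fun Z : Set Loc => SatSet S ψ ∪ (SatSet S φ ∩ S.CPre A Z)) ∧
  IsLeast {Z : Set Loc | SatSet S ψ ∪ (SatSet S φ ∩ S.CPre A Z) = Z}
    (SatSet S (.coal A (.untl φ ψ)))

section UntilLfpAux

open Classical

variable {Agt Loc P M : Type}

lemma hist_zero' (ρ : ℕ → Loc) : GS.hist ρ 0 = [] := by simp [GS.hist]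

lemma hist_succ_head (ρ : ℕ → Loc) (i : ℕ) :
    GS.hist ρ (i+1) = ρ 0 :: GS.hist (fun j => ρ (j+1)) i := by
  simp [GS.hist, List.ofFn_succ]

lemma hist_succ_last (ρ : ℕ → Loc) (i : ℕ) :
    GS.hist ρ (i+1) = GS.hist ρ i ++ [ρ i] := by
  show List.ofFn _ = _
  rw [List.ofFn_succ']
  simp [GS.hist]

noncomputable def buildAux (step : List Loc → Loc → Loc) (ℓ : Loc) : ℕ → List Loc × Loc
  | 0 => ([], ℓ)
  | n+1 => ((buildAux step ℓ n).1 ++ [(buildAux step ℓ n).2],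
            step (buildAux step ℓ n).1 (buildAux step ℓ n).2)

noncomputable def build (step : List Loc → Loc → Loc) (ℓ : Loc) (n : ℕ) : Loc :=
  (buildAux step ℓ n).2

lemma buildAux_fst (step : List Loc → Loc → Loc) (ℓ : Loc) (n : ℕ) :
    (buildAux step ℓ n).1 = GS.hist (build step ℓ) n := by
  induction n with
  | zero => simp [buildAux, hist_zero']
  | succ n ih =>
      rw [hist_succ_last]
      show (buildAux step ℓ n).1 ++ [(buildAux step ℓ n).2] = _
      rw [ih]; rfl

lemma build_zero (step : List Loc → Loc → Loc) (ℓ : Loc) : build step ℓ 0 = ℓ := rfl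

lemma build_succ (step : List Loc → Loc → Loc) (ℓ : Loc) (n : ℕ) :
    build step ℓ (n+1) = step (GS.hist (build step ℓ) n) (build step ℓ n) := by
  show step (buildAux step ℓ n).1 (buildAux step ℓ n).2 = _
  rw [buildAux_fst]; rfl

lemma next_congr (S : GS Agt Loc P M) (ℓ : Loc) (A : Set Agt) (m m' : Agt → M)
    (h : ∀ a ∈ A, m a = m' a) : S.Next ℓ A m = S.Next ℓ A m' := by
  ext ℓ'
  constructor <;> rintro ⟨n, hv, hA, hs⟩
  · exact ⟨n, hv, fun a ha => (hA a ha).trans (h a ha), hs⟩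
  · exact ⟨n, hv, fun a ha => (hA a ha).trans (h a ha).symm, hs⟩

lemma ssat_coal_untl (S : GS Agt Loc P M) (A : Set Agt) (φ ψ : SForm Agt P) (ℓ : Loc) :
    SSat S (.coal A (.untl φ ψ)) ℓ ↔
      ∃ F : GS.Strat Agt Loc M, S.StratValid A F ∧
        ∀ ρ : ℕ → Loc, S.Out A ℓ F ρ →
          ∃ i, SSat S ψ (ρ i) ∧ ∀ j < i, SSat S φ (ρ j) := by
  rw [SSat]
  constructor <;> rintro ⟨F, hF, hout⟩ <;> refine ⟨F, hF, fun ρ hρ => ?_⟩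
  · have := hout ρ hρ; rwa [PSat] at this
  · rw [PSat]; exact hout ρ hρ

theorem untilLfp_generic (S : GS Agt Loc P M) (A : Set Agt)
    (H2 : ∀ ℓ a, (S.mov ℓ a).Nonempty)
    (H1 : ∀ ℓ (m : Agt → M), (∀ a ∈ A, m a ∈ S.mov ℓ a) → (S.Next ℓ A m).Nonempty)
    (φ ψ : SForm Agt P) : UntilLfpClaim S A φ ψ := by
  have hmono : Monotone (fun Z : Set Loc => SatSet S ψ ∪ (SatSet S φ ∩ S.CPre A Z)) :=
    fun T T' h => Set.union_subset_union_right _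
      (Set.inter_subset_inter_right _ (S.cpre_mono A h))
  set W : Set Loc := SatSet S (.coal A (.untl φ ψ)) with hW
  have hWmem : ∀ ℓ, ℓ ∈ W ↔
      ∃ F : GS.Strat Agt Loc M, S.StratValid A F ∧
        ∀ ρ : ℕ → Loc, S.Out A ℓ F ρ →
          ∃ i, SSat S ψ (ρ i) ∧ ∀ j < i, SSat S φ (ρ j) :=
    fun ℓ => ssat_coal_untl S A φ ψ ℓ
  -- a default valid strategy
  let Fdef : GS.Strat Agt Loc M := fun _ c a => (H2 c a).choose
  have hFdef : S.StratValid A Fdef := fun _ c a _ => (H2 c a).choose_spec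
  -- choice of a winning strategy for each winning location
  let Fof : Loc → GS.Strat Agt Loc M := fun ℓ' =>
    if h : ℓ' ∈ W then ((hWmem ℓ').1 h).choose else Fdef
  have hFofValid : ∀ ℓ', S.StratValid A (Fof ℓ') := by
    intro ℓ'
    by_cases h : ℓ' ∈ W
    · simp only [Fof, dif_pos h]; exact ((hWmem ℓ').1 h).choose_spec.1
    · simp only [Fof, dif_neg h]; exact hFdef
  have hFofWin : ∀ ℓ' ∈ W, ∀ ρ, S.Out A ℓ' (Fof ℓ') ρ →
      ∃ i, SSat S ψ (ρ i) ∧ ∀ j < i, SSat S φ (ρ j) := by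
    intro ℓ' h ρ hρ
    have := ((hWmem ℓ').1 h).choose_spec.2 ρ
    simp only [Fof, dif_pos h] at hρ
    exact this hρ
  refine ⟨hmono, ⟨?_, ?_⟩⟩
  · -- W is a fixpoint
    show SatSet S ψ ∪ (SatSet S φ ∩ S.CPre A W) = W
    apply Set.Subset.antisymm
    · rintro ℓ (hψℓ | ⟨hφℓ, mA, hmA, hnext⟩)
      · -- ψ holds : play anything
        refine (hWmem ℓ).2 ⟨Fdef, hFdef, fun ρ hρ => ⟨0, ?_, by omega⟩⟩
        rw [hρ.1]; exact hψℓ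
      · -- φ ∧ CPre W : combine strategies
        refine (hWmem ℓ).2 ⟨?_, ?_, ?_⟩
        · exact fun h c => match h with
            | [] => fun a => if c = ℓ ∧ a ∈ A then mA a else (H2 c a).choose
            | _ :: t => Fof (t.headD c) t c
        · intro h c a ha
          match h with
          | [] =>
              by_cases hc : c = ℓ ∧ a ∈ A
              · simp only [if_pos hc]; rw [hc.1]; exact hmA a ha
              · simp only [if_neg hc]; exact (H2 c a).choose_spec
          | x :: t => exact hFofValid (t.headD c) t c a ha
        · rintro ρ ⟨hρ0, hρs⟩
          have h1 : ρ 1 ∈ S.Next ℓ A mA := by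
            have := hρs 0
            rw [hist_zero'] at this
            rw [hρ0] at this
            have hcongr : S.Next ℓ A (fun a => if ℓ = ℓ ∧ a ∈ A then mA a else (H2 ℓ a).choose)
                = S.Next ℓ A mA := by
              apply next_congr
              intro a ha
              simp [ha]
            rw [← hcongr]; exact this
          have h1W : ρ 1 ∈ W := hnext h1
          -- the shifted run is an outcome of Fof (ρ 1)
          set ρ' : ℕ → Loc := fun i => ρ (i + 1) with hρ'
          have hout' : S.Out A (ρ 1) (Fof (ρ 1)) ρ' := by
            refine ⟨rfl, fun i => ?_⟩
            have := hρs (i + 1)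
            rw [hist_succ_head, hρ0] at this
            have hh : (GS.hist ρ' i).headD (ρ' i) = ρ 1 := by
              cases i with
              | zero => rw [hist_zero']; rfl
              | succ k => rw [hist_succ_head]; rfl
            have : ρ' (i+1) ∈ S.Next (ρ' i) A (Fof ((GS.hist ρ' i).headD (ρ' i)) (GS.hist ρ' i) (ρ' i)) := this
            rwa [hh] at this
          obtain ⟨i, hiψ, hiφ⟩ := hFofWin (ρ 1) h1W ρ' hout'
          refine ⟨i + 1, hiψ, fun j hj => ?_⟩
          cases j with
          | zero => rw [hρ0]; exact hφℓ
          | succ k => exact hiφ k (by omega)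
    · -- W ⊆ f W
      intro ℓ hℓ
      obtain ⟨F, hFv, hFw⟩ := (hWmem ℓ).1 hℓ
      by_cases hψℓ : SSat S ψ ℓ
      · exact Or.inl hψℓ
      · refine Or.inr ⟨?_, ?_⟩
        · -- φ holds at ℓ : build some outcome
          let stepf : List Loc → Loc → Loc := fun h c =>
            (H1 c (F h c) (fun a ha => hFv h c a ha)).choose
          set ρ := build stepf ℓ with hρdef
          have hout : S.Out A ℓ F ρ := by
            refine ⟨build_zero _ _, fun i => ?_⟩
            rw [hρdef, build_succ]
            exact (H1 (ρ i) (F (GS.hist ρ i) (ρ i)) (fun a ha => hFv _ _ a ha)).choose_spec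
          obtain ⟨i, hiψ, hiφ⟩ := hFw ρ hout
          cases i with
          | zero => rw [hout.1] at hiψ; exact absurd hiψ hψℓ
          | succ k =>
              have := hiφ 0 (by omega)
              rwa [hout.1] at this
        · -- CPre : the first move of F works
          refine ⟨F [] ℓ, fun a ha => hFv [] ℓ a ha, ?_⟩
          intro ℓ' hℓ'
          refine (hWmem ℓ').2 ⟨fun t c => F (ℓ :: t) c, fun t c a ha => hFv _ c a ha, ?_⟩
          rintro ρ' ⟨hρ'0, hρ's⟩
          set ρ : ℕ → Loc := fun n => match n with | 0 => ℓ | k+1 => ρ' k with hρdef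
          have hout : S.Out A ℓ F ρ := by
            refine ⟨rfl, fun i => ?_⟩
            cases i with
            | zero =>
                rw [hist_zero']
                show ρ' 0 ∈ _
                rw [hρ'0]
                exact hℓ'
            | succ k =>
                have := hρ's k
                rw [hist_succ_head]
                exact this
          obtain ⟨i, hiψ, hiφ⟩ := hFw ρ hout
          cases i with
          | zero => exact absurd hiψ hψℓ
          | succ k =>
              exact ⟨k, hiψ, fun j hj => hiφ (j+1) (by omega)⟩
  · -- W is below every fixpoint
    intro Z hZ
    intro ℓ hℓ
    by_contra hℓZ
    obtain ⟨F, hFv, hFw⟩ := (hWmem ℓ).1 hℓ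
    -- step: evade Z if possible
    let stepf : List Loc → Loc → Loc := fun h c =>
      if hx : ∃ ℓ'', ℓ'' ∈ S.Next c A (F h c) ∧ ℓ'' ∉ Z then hx.choose
      else (H1 c (F h c) (fun a ha => hFv h c a ha)).choose
    have hstep_mem : ∀ h c, stepf h c ∈ S.Next c A (F h c) := by
      intro h c
      by_cases hx : ∃ ℓ'', ℓ'' ∈ S.Next c A (F h c) ∧ ℓ'' ∉ Z
      · simp only [stepf, dif_pos hx]; exact hx.choose_spec.1
      · simp only [stepf, dif_neg hx]
        exact (H1 c (F h c) (fun a ha => hFv h c a ha)).choose_spec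
    have hstep_evade : ∀ h c, c ∉ S.CPre A Z → stepf h c ∉ Z := by
      intro h c hc
      have hx : ∃ ℓ'', ℓ'' ∈ S.Next c A (F h c) ∧ ℓ'' ∉ Z := by
        by_contra hnx
        push_neg at hnx
        exact hc ⟨F h c, fun a ha => hFv h c a ha, fun x hx => hnx x hx⟩
      simp only [stepf, dif_pos hx]; exact hx.choose_spec.2
    set ρ := build stepf ℓ with hρdef
    have hout : S.Out A ℓ F ρ := by
      refine ⟨build_zero _ _, fun i => ?_⟩
      rw [hρdef, build_succ]
      exact hstep_mem _ _
    obtain ⟨i, hiψ, hiφ⟩ := hFw ρ hout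
    have hnotZ : ∀ j ≤ i, ρ j ∉ Z := by
      intro j
      induction j with
      | zero => intro _; rw [hout.1]; exact hℓZ
      | succ k ih =>
          intro hk
          have hkZ : ρ k ∉ Z := ih (by omega)
          have hkC : ρ k ∉ S.CPre A Z := by
            intro hc
            exact hkZ (hZ ▸ Or.inr ⟨hiφ k (by omega), hc⟩)
          rw [hρdef, build_succ]
          exact hstep_evade _ _ hkC
    have : ρ i ∈ Z := hZ ▸ Or.inl hiψ
    exact hnotZ i le_rfl this

theorem untilLfp_CGS {Agt Loc P : Type} (G : CGS Agt Loc P) (hG : G.WellFormed)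
    (A : Set Agt) (φ ψ : SForm Agt P) : UntilLfpClaim G.toGS A φ ψ := by
  classical
  apply untilLfp_generic
  · intro ℓ a
    exact Finset.coe_nonempty.mpr (hG ℓ a)
  · intro ℓ m hm
    let m' : Agt → ℕ := fun a => if a ∈ A then m a else (hG ℓ a).choose
    refine ⟨G.edg ℓ m', m', fun a => ?_, fun a ha => by simp [m', ha], rfl⟩
    by_cases ha : a ∈ A
    · simpa [m', ha] using hm a ha
    · simpa [m', ha, CGS.toGS] using (hG ℓ a).choose_spec

theorem untilLfp_ATS {Agt Loc P : Type} (T : ATS Agt Loc P) (hT : T.WellFormed)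
    (A : Set Agt) (φ ψ : SForm Agt P) : UntilLfpClaim T.toGS A φ ψ := by
  classical
  apply untilLfp_generic
  · intro ℓ a; exact hT.1 ℓ a
  · intro ℓ m hm
    let m' : Agt → Set Loc := fun a => if a ∈ A then m a else (hT.1 ℓ a).choose
    have hm' : ∀ a, m' a ∈ T.chc ℓ a := by
      intro a
      by_cases ha : a ∈ A
      · simpa [m', ha, ATS.toGS] using hm a ha
      · simpa [m', ha] using (hT.1 ℓ a).choose_spec
    obtain ⟨ℓ', hℓ'⟩ := hT.2 ℓ m' hm'
    refine ⟨ℓ', m', hm', fun a ha => by simp [m', ha], ?_⟩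
    show ℓ' ∈ ⋂ a, m' a
    rw [hℓ']; rfl

end UntilLfpAux

theorem until_is_least_fixpoint_of_CPre_map
    (Agt P : Type) [Fintype Agt] [Fintype P] :
    (∀ (Loc : Type) [Fintype Loc] (G : CGS Agt Loc P), G.WellFormed →
      ∀ (A : Set Agt) (φ ψ : SForm Agt P), UntilLfpClaim G.toGS A φ ψ) ∧
    (∀ (Loc : Type) [Fintype Loc] (T : ATS Agt Loc P), T.WellFormed →
      ∀ (A : Set Agt) (φ ψ : SForm Agt P), UntilLfpClaim T.toGS A φ ψ) := by
  refine ⟨fun Loc _ G hG => untilLfp_CGS G hG, fun Loc _ T hT => untilLfp_ATS T hT⟩
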